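/- Assume ZF and that 𝒞_{ω₁} is a normal filter on ω₁. If Measuring* holds, then 𝒞_{ω₁} is an ultrafilter on ω₁. -/

import Mathlib

noncomputable def omega1 : Ordinal.{0} := (Cardinal.aleph 1).ord

def IsClub' (C : Set Ordinal) : Prop :=
  C ⊆ Set.Iio omega1 ∧
    (∀ δ, δ < omega1 → δ ≠ 0 → sSup (C ∩ Set.Iio δ) = δ → δ ∈ C) ∧
    ∀ α, α < omega1 → ∃ β ∈ C, α < β

def IsStationary' (S : Set Ordinal) : Prop :=
  S ⊆ Set.Iio omega1 ∧ ∀ C, IsClub' C → (S ∩ C).Nonempty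

/-- The collection `𝒞_{ω₁}` of subsets of `ω₁` containing a club. -/
def ClubFilter : Set (Set Ordinal) :=
  {X | ∃ C, IsClub' C ∧ C ⊆ X}

/-- Normality of `𝒞_{ω₁}`: closure under diagonal intersections. -/
def ClubFilterNormal : Prop :=
  ∀ W : Ordinal → Set Ordinal, (∀ α, α < omega1 → W α ∈ ClubFilter) →
    {δ | δ < omega1 ∧ ∀ α < δ, δ ∈ W α} ∈ ClubFilter

/-- The principle `Measuring*`: every sequence of arbitrary subsets `X δ ⊆ δ`
(for limit `δ < ω₁`) is measured by some club. -/
def MeasuringStar : Prop :=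
  ∀ X : Ordinal → Set Ordinal,
    (∀ δ, δ < omega1 → Order.IsSuccLimit δ → X δ ⊆ Set.Iio δ) →
    ∃ C, IsClub' C ∧ ∀ δ ∈ C, Order.IsSuccLimit δ →
      ∃ α < δ, ((C ∩ Set.Iio δ) \ Set.Iio α ⊆ X δ ∨
        ((C ∩ Set.Iio δ) \ Set.Iio α) ∩ X δ = ∅)

lemma omega1_isLimit : Order.IsSuccLimit omega1 := Cardinal.isSuccLimit_ord (Cardinal.aleph0_le_aleph 1)

lemma succ_lt_omega1 {α : Ordinal} (h : α < omega1) : α + 1 < omega1 := by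
  rw [Ordinal.add_one_eq_succ]; exact omega1_isLimit.succ_lt h

lemma sup_eq_iff {s : Set Ordinal} {δ : Ordinal} (hδ : δ ≠ 0) (hs : s ⊆ Set.Iio δ) :
    sSup s = δ ↔ ∀ β < δ, ∃ x ∈ s, β < x := by
  constructor
  · intro h β hβ
    by_contra hc
    push_neg at hc
    have : sSup s ≤ β := csSup_le' (fun x hx => hc x hx)
    rw [h] at this
    exact absurd this (not_le.mpr hβ)
  · intro h
    apply le_antisymm
    · exact csSup_le' (fun x hx => (hs hx).le)
    · by_contra hc
      push_neg at hc
      obtain ⟨x, hx, hlt⟩ := h _ hc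
      exact absurd (le_csSup ⟨δ, fun y hy => (hs hy).le⟩ hx) (not_le.mpr hlt)

lemma sup_mono_eq {s t : Set Ordinal} {δ : Ordinal} (hδ : δ ≠ 0) (hst : s ⊆ t)
    (ht : t ⊆ Set.Iio δ) (h : sSup s = δ) : sSup t = δ := by
  rw [sup_eq_iff hδ ht]
  intro β hβ
  obtain ⟨x, hx, h'⟩ := (sup_eq_iff hδ (hst.trans ht)).mp h β hβ
  exact ⟨x, hst hx, h'⟩

lemma isLimit_of_limitPoint {δ : Ordinal} (hδ : δ ≠ 0)
    (h : ∀ β < δ, ∃ x, β < x ∧ x < δ) : Order.IsSuccLimit δ := by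
  refine Ordinal.isSuccLimit_iff.mpr ⟨hδ, Order.isSuccPrelimit_of_succ_lt fun α hα => ?_⟩
  obtain ⟨x, h1, h2⟩ := h α hα
  exact lt_of_le_of_lt (Order.succ_le_of_lt h1) h2

lemma tail_club {C : Set Ordinal} {β : Ordinal} (hC : IsClub' C) (hβ : β < omega1) :
    IsClub' (C ∩ Set.Ioi β) := by
  obtain ⟨hsub, hclosed, hunb⟩ := hC
  refine ⟨fun x hx => hsub hx.1, ?_, ?_⟩
  · intro δ hδ hδ0 hsup
    have h1 : sSup (C ∩ Set.Iio δ) = δ :=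
      sup_mono_eq hδ0 (fun x hx => ⟨hx.1.1, hx.2⟩) Set.inter_subset_right hsup
    obtain ⟨x, hx, _⟩ := (sup_eq_iff hδ0 Set.inter_subset_right).mp hsup 0
      (pos_iff_ne_zero.mpr hδ0)
    exact ⟨hclosed δ hδ hδ0 h1, Set.mem_Ioi.mpr (lt_trans hx.1.2 hx.2)⟩
  · intro α hα
    obtain ⟨x, hx, hlt⟩ := hunb (max α β) (max_lt hα hβ)
    exact ⟨x, ⟨hx, lt_of_le_of_lt (le_max_right α β) hlt⟩,
      lt_of_le_of_lt (le_max_left α β) hlt⟩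

lemma Iio_Ioi_club {β : Ordinal} (hβ : β < omega1) :
    IsClub' (Set.Iio omega1 ∩ Set.Ioi β) := by
  refine ⟨Set.inter_subset_left, ?_, ?_⟩
  · intro δ hδ hδ0 hsup
    obtain ⟨x, hx, _⟩ := (sup_eq_iff hδ0 Set.inter_subset_right).mp hsup 0
      (pos_iff_ne_zero.mpr hδ0)
    exact ⟨hδ, Set.mem_Ioi.mpr (lt_trans hx.1.2 hx.2)⟩
  · intro α hα
    have hm : max α β < max α β + 1 := by
      rw [Ordinal.add_one_eq_succ]; exact Order.lt_succ _
    exact ⟨max α β + 1, ⟨succ_lt_omega1 (max_lt hα hβ),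
      lt_of_le_of_lt (le_max_right α β) hm⟩, lt_of_le_of_lt (le_max_left α β) hm⟩

lemma inter_clubs (hnormal : ClubFilterNormal) {C D : Set Ordinal}
    (hC : IsClub' C) (hD : IsClub' D) : ∃ E, IsClub' E ∧ E ⊆ C ∩ D := by
  have hW : ∀ α, α < omega1 → (if α = 0 then C else D) ∈ ClubFilter := by
    intro α _
    by_cases h : α = 0
    · rw [if_pos h]; exact ⟨C, hC, subset_rfl⟩
    · rw [if_neg h]; exact ⟨D, hD, subset_rfl⟩
  obtain ⟨E₀, hE₀, hsub⟩ := hnormal _ hW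
  have h1 : (1 : Ordinal) < omega1 := by
    have := succ_lt_omega1 omega1_isLimit.pos
    simpa using this
  refine ⟨E₀ ∩ Set.Ioi 1, tail_club hE₀ h1, ?_⟩
  rintro δ ⟨hδE, hδ1⟩
  have hδ := hsub hδE
  have h0 : δ ∈ (if (0:Ordinal) = 0 then C else D) := hδ.2 0 (lt_trans zero_lt_one hδ1)
  have h1' : δ ∈ (if (1:Ordinal) = 0 then C else D) := hδ.2 1 hδ1
  rw [if_pos rfl] at h0
  rw [if_neg one_ne_zero] at h1'
  exact ⟨h0, h1'⟩

lemma limit_points_club (hnormal : ClubFilterNormal) {C : Set Ordinal} (hC : IsClub' C) :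
    ∃ E, IsClub' E ∧ ∀ δ ∈ E, δ ∈ C ∧ Order.IsSuccLimit δ ∧ ∀ β < δ, ∃ x ∈ C, β < x ∧ x < δ := by
  have hW : ∀ α, α < omega1 → {δ : Ordinal | ∃ x ∈ C, α < x ∧ x < δ} ∈ ClubFilter := by
    intro α hα
    obtain ⟨β, hβC, hβ⟩ := hC.2.2 α hα
    refine ⟨C ∩ Set.Ioi β, tail_club hC (hC.1 hβC), ?_⟩
    rintro δ ⟨hδC, hδβ⟩
    exact ⟨β, hβC, hβ, hδβ⟩
  obtain ⟨E₀, hE₀, hsub⟩ := hnormal _ hW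
  refine ⟨E₀ ∩ Set.Ioi 0, tail_club hE₀ omega1_isLimit.pos, ?_⟩
  rintro δ ⟨hδE, hδ0⟩
  obtain ⟨hδω, hδW⟩ := hsub hδE
  have hlp : ∀ β < δ, ∃ x ∈ C, β < x ∧ x < δ := fun β hβ => hδW β hβ
  have hδ0' : δ ≠ 0 := pos_iff_ne_zero.mp hδ0
  have hlim : Order.IsSuccLimit δ := isLimit_of_limitPoint hδ0'
    (fun β hβ => let ⟨x, _, h1, h2⟩ := hlp β hβ; ⟨x, h1, h2⟩)
  have hsup : sSup (C ∩ Set.Iio δ) = δ := (sup_eq_iff hδ0' Set.inter_subset_right).mpr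
    (fun β hβ => let ⟨x, hxC, h1, h2⟩ := hlp β hβ; ⟨x, ⟨hxC, h2⟩, h1⟩)
  exact ⟨hC.2.1 δ hδω hδ0' hsup, hlim, hlp⟩

lemma side_closed {C E Y Z : Set Ordinal} (hE : IsClub' E)
    (hlp : ∀ δ ∈ E, ∀ β < δ, ∃ x ∈ C, β < x ∧ x < δ)
    (hmeas : ∀ δ ∈ E, ∃ α < δ, ((C ∩ Set.Iio δ) \ Set.Iio α ⊆ Y ∨
      (C ∩ Set.Iio δ) \ Set.Iio α ⊆ Z))
    (hdisj : Y ∩ Z = ∅)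
    {δ : Ordinal} (hδω : δ < omega1) (hδ0 : δ ≠ 0)
    (hsup : sSup ({γ | γ ∈ E ∧ ∃ α < γ, (C ∩ Set.Iio γ) \ Set.Iio α ⊆ Y} ∩ Set.Iio δ) = δ) :
    δ ∈ {γ | γ ∈ E ∧ ∃ α < γ, (C ∩ Set.Iio γ) \ Set.Iio α ⊆ Y} := by
  have hδE : δ ∈ E := hE.2.1 δ hδω hδ0
    (sup_mono_eq hδ0 (fun x hx => ⟨hx.1.1, hx.2⟩) Set.inter_subset_right hsup)
  refine ⟨hδE, ?_⟩
  obtain ⟨α, hα, hside⟩ := hmeas δ hδE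
  rcases hside with h | h
  · exact ⟨α, hα, h⟩
  · exfalso
    obtain ⟨γ, ⟨⟨hγE, αγ, hαγ, hγY⟩, hγδ⟩, hαγ'⟩ :=
      (sup_eq_iff hδ0 Set.inter_subset_right).mp hsup α hα
    obtain ⟨x, hxC, hx1, hx2⟩ := hlp γ hγE (max α αγ) (max_lt hαγ' hαγ)
    have hxY : x ∈ Y := hγY ⟨⟨hxC, hx2⟩,
      not_lt.mpr (le_of_lt (lt_of_le_of_lt (le_max_right α αγ) hx1))⟩
    have hxZ : x ∈ Z := h ⟨⟨hxC, lt_trans hx2 hγδ⟩,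
      not_lt.mpr (le_of_lt (lt_of_le_of_lt (le_max_left α αγ) hx1))⟩
    exact Set.eq_empty_iff_forall_notMem.mp hdisj x ⟨hxY, hxZ⟩

lemma final_step (hnormal : ClubFilterNormal) {C E Y : Set Ordinal} (hCclub : IsClub' C)
    (hA : IsClub' {γ | γ ∈ E ∧ ∃ α < γ, (C ∩ Set.Iio γ) \ Set.Iio α ⊆ Y}) :
    Y ∈ ClubFilter := by
  set A := {γ | γ ∈ E ∧ ∃ α < γ, (C ∩ Set.Iio γ) \ Set.Iio α ⊆ Y} with hAdef
  have key : ∃ α', α' < omega1 ∧ ∀ γ, γ < omega1 → ∃ δ ∈ A, γ < δ ∧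
      (C ∩ Set.Iio δ) \ Set.Iio α' ⊆ Y := by
    by_contra hcon
    push_neg at hcon
    have hg : ∀ α' : Ordinal, ∃ γ, γ < omega1 ∧
        (α' < omega1 → ∀ δ ∈ A, γ < δ → ¬ ((C ∩ Set.Iio δ) \ Set.Iio α' ⊆ Y)) := by
      intro α'
      by_cases h : α' < omega1
      · obtain ⟨γ, hγ, hγ2⟩ := hcon α' h
        exact ⟨γ, hγ, fun _ δ hδ hγδ => hγ2 δ hδ hγδ⟩
      · exact ⟨0, omega1_isLimit.pos, fun h' => absurd h' h⟩
    choose g hg1 hg2 using hg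
    have hW : ∀ α, α < omega1 → (Set.Iio omega1 ∩ Set.Ioi (g α)) ∈ ClubFilter :=
      fun α _ => ⟨_, Iio_Ioi_club (hg1 α), subset_rfl⟩
    obtain ⟨C₂, hC₂, hsub₂⟩ := hnormal _ hW
    obtain ⟨F, hF, hFsub⟩ := inter_clubs hnormal hA hC₂
    obtain ⟨δ, hδF, _⟩ := hF.2.2 0 omega1_isLimit.pos
    obtain ⟨hδA, hδC₂⟩ := hFsub hδF
    obtain ⟨hδE, α, hαδ, hPδ⟩ := hδA
    have hδΔ := hsub₂ hδC₂
    have hmem : δ ∈ Set.Iio omega1 ∩ Set.Ioi (g α) := hδΔ.2 α hαδ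
    exact hg2 α (lt_trans hαδ hδΔ.1) δ ⟨hδE, α, hαδ, hPδ⟩ hmem.2 hPδ
  obtain ⟨α', hα', hkey⟩ := key
  refine ⟨C ∩ Set.Ioi α', tail_club hCclub hα', ?_⟩
  rintro β ⟨hβC, hβα⟩
  obtain ⟨δ, _, hβδ, hP⟩ := hkey β (hCclub.1 hβC)
  exact hP ⟨⟨hβC, hβδ⟩, Set.mem_Iio.not.mpr (not_lt.mpr (le_of_lt hβα))⟩

theorem stmt8 (hnormal : ClubFilterNormal) (hms : MeasuringStar) :
    ∀ S : Set Ordinal, S ⊆ Set.Iio omega1 →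
      S ∈ ClubFilter ∨ (Set.Iio omega1 \ S) ∈ ClubFilter := by
  intro S _
  obtain ⟨C, hC, hmeas₀⟩ := hms (fun δ => S ∩ Set.Iio δ)
    (fun δ _ _ => Set.inter_subset_right)
  obtain ⟨E, hE, hEprop⟩ := limit_points_club hnormal hC
  have hlp : ∀ δ ∈ E, ∀ β < δ, ∃ x ∈ C, β < x ∧ x < δ := fun δ h => (hEprop δ h).2.2
  set Y₁ := S with hY₁
  set Y₂ := Set.Iio omega1 \ S with hY₂
  have hmeas : ∀ δ ∈ E, ∃ α < δ, ((C ∩ Set.Iio δ) \ Set.Iio α ⊆ Y₁ ∨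
      (C ∩ Set.Iio δ) \ Set.Iio α ⊆ Y₂) := by
    intro δ hδE
    obtain ⟨hδC, hδlim, _⟩ := hEprop δ hδE
    obtain ⟨α, hα, hside⟩ := hmeas₀ δ hδC hδlim
    refine ⟨α, hα, ?_⟩
    rcases hside with h | h
    · exact Or.inl (fun x hx => (h hx).1)
    · refine Or.inr (fun x hx => ⟨hC.1 hx.1.1, fun hxS => ?_⟩)
      exact Set.eq_empty_iff_forall_notMem.mp h x ⟨hx, hxS, hx.1.2⟩
  have hmeas' : ∀ δ ∈ E, ∃ α < δ, ((C ∩ Set.Iio δ) \ Set.Iio α ⊆ Y₂ ∨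
      (C ∩ Set.Iio δ) \ Set.Iio α ⊆ Y₁) :=
    fun δ h => (hmeas δ h).imp (fun α => And.imp_right Or.symm)
  have hd1 : Y₁ ∩ Y₂ = ∅ := by
    ext x; simp only [hY₁, hY₂, Set.mem_inter_iff, Set.mem_diff, Set.mem_empty_iff_false,
      iff_false, not_and]
    tauto
  have hd2 : Y₂ ∩ Y₁ = ∅ := by rw [Set.inter_comm]; exact hd1
  by_cases hAu : ∀ γ, γ < omega1 → ∃ δ ∈ {γ | γ ∈ E ∧ ∃ α < γ,
      (C ∩ Set.Iio γ) \ Set.Iio α ⊆ Y₁}, γ < δ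
  · left
    exact final_step hnormal hC ⟨fun x hx => hE.1 hx.1,
      fun δ h1 h2 h3 => side_closed hE hlp hmeas hd1 h1 h2 h3, hAu⟩
  · right
    push_neg at hAu
    obtain ⟨γ₀, hγ₀, hbd⟩ := hAu
    have hBu : ∀ γ, γ < omega1 → ∃ δ ∈ {γ | γ ∈ E ∧ ∃ α < γ,
        (C ∩ Set.Iio γ) \ Set.Iio α ⊆ Y₂}, γ < δ := by
      intro γ hγ
      obtain ⟨δ, hδE, hδgt⟩ := hE.2.2 (max γ γ₀) (max_lt hγ hγ₀)
      obtain ⟨α, hα, hside⟩ := hmeas δ hδE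
      rcases hside with h | h
      · exact absurd (lt_of_le_of_lt (le_max_right _ _) hδgt) (not_lt.mpr (hbd δ ⟨hδE, α, hα, h⟩))
      · exact ⟨δ, ⟨hδE, α, hα, h⟩, lt_of_le_of_lt (le_max_left _ _) hδgt⟩
    exact final_step hnormal hC ⟨fun x hx => hE.1 hx.1,
      fun δ h1 h2 h3 => side_closed hE hlp hmeas' hd2 h1 h2 h3, hBu⟩
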